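/- Let N ≥ 2, let M satisfy 1 ≤ M ≤ N/2 with M even, and let w be a nonzero real number. Then vertices 1 and N of the modified path P_N^{(M,w)} are not strongly cospectral; in particular, 0 is an eigenvalue of its adjacency matrix A admitting one eigenvector v₊ with v₊(1) = v₊(N) ≠ 0 and another eigenvector v₋ with v₋(1) = −v₋(N) ≠ 0. -/

import Mathlib

open Matrix Polynomial

/-- `E` is the orthogonal projection matrix onto the eigenspace `{v : A v = θ v}`:
it is symmetric, idempotent, its range is contained in the eigenspace, and it fixes
the eigenspace pointwise. -/
def IsEigenprojection {V : Type*} [Fintype V] [DecidableEq V]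
    (A : Matrix V V ℝ) (θ : ℝ) (E : Matrix V V ℝ) : Prop :=
  E.IsSymm ∧ E * E = E ∧ (∀ v : V → ℝ, A *ᵥ (E *ᵥ v) = θ • (E *ᵥ v)) ∧
    (∀ v : V → ℝ, A *ᵥ v = θ • v → E *ᵥ v = v)

/-- Vertices `x` and `y` are strongly cospectral: for every eigenvalue `θ` of `A`,
`E_θ e_x = ± E_θ e_y`. -/
def StronglyCospectral {V : Type*} [Fintype V] [DecidableEq V]
    (A : Matrix V V ℝ) (x y : V) : Prop :=
  ∀ (θ : ℝ) (E : Matrix V V ℝ), IsEigenprojection A θ E →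
    E *ᵥ Pi.single x 1 = E *ᵥ Pi.single y 1 ∨ E *ᵥ Pi.single x 1 = -(E *ᵥ Pi.single y 1)

/-- The adjacency matrix of the modified path `P_N^{(M,w)}` on vertices `0, 1, …, N+1`:
a path on vertices `1, …, N`, with extra vertex `0` joined to vertex `M` and extra vertex
`N+1` joined to vertex `N+1-M`, each by an edge of weight `w`. -/
def modPathAdj (N M : ℕ) (w : ℝ) : Matrix (Fin (N + 2)) (Fin (N + 2)) ℝ :=
  Matrix.of fun i j =>
    if (1 ≤ (i : ℕ) ∧ (i : ℕ) ≤ N - 1 ∧ (j : ℕ) = (i : ℕ) + 1) ∨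
       (1 ≤ (j : ℕ) ∧ (j : ℕ) ≤ N - 1 ∧ (i : ℕ) = (j : ℕ) + 1) then 1
    else if ((i : ℕ) = 0 ∧ (j : ℕ) = M) ∨ ((j : ℕ) = 0 ∧ (i : ℕ) = M) then w
    else if ((i : ℕ) = N + 1 - M ∧ (j : ℕ) = N + 1) ∨
            ((j : ℕ) = N + 1 - M ∧ (i : ℕ) = N + 1) then w
    else 0

variable {n : ℕ}

noncomputable def eigSpace (A : Matrix (Fin n) (Fin n) ℝ) (θ : ℝ) :
    Submodule ℝ (EuclideanSpace ℝ (Fin n)) :=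
  Submodule.comap (WithLp.linearEquiv 2 ℝ (Fin n → ℝ)).toLinearMap
    (LinearMap.ker (Matrix.mulVecLin A - θ • LinearMap.id))

lemma mem_eigSpace {A : Matrix (Fin n) (Fin n) ℝ} {θ : ℝ} {v : EuclideanSpace ℝ (Fin n)} :
    v ∈ eigSpace A θ ↔ A *ᵥ (WithLp.equiv 2 (Fin n → ℝ) v) = θ • (WithLp.equiv 2 (Fin n → ℝ) v) := by
  simp only [eigSpace, Submodule.mem_comap, LinearMap.mem_ker, LinearMap.sub_apply,
    LinearMap.smul_apply, LinearMap.id_apply, Matrix.mulVecLin_apply, sub_eq_zero]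
  rfl

noncomputable def eigProjLin (A : Matrix (Fin n) (Fin n) ℝ) (θ : ℝ) :
    (Fin n → ℝ) →ₗ[ℝ] (Fin n → ℝ) :=
  (WithLp.linearEquiv 2 ℝ (Fin n → ℝ)).toLinearMap ∘ₗ
    ((eigSpace A θ).subtype ∘ₗ (eigSpace A θ).orthogonalProjectionOnto.toLinearMap) ∘ₗ
      (WithLp.linearEquiv 2 ℝ (Fin n → ℝ)).symm.toLinearMap

lemma eigProjLin_apply (A : Matrix (Fin n) (Fin n) ℝ) (θ : ℝ) (x : Fin n → ℝ) :
    eigProjLin A θ x = WithLp.equiv 2 (Fin n → ℝ)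
      ((eigSpace A θ).orthogonalProjectionOnto ((WithLp.equiv 2 (Fin n → ℝ)).symm x)) := rfl

lemma eigProjLin_mem (A : Matrix (Fin n) (Fin n) ℝ) (θ : ℝ) (x : Fin n → ℝ) :
    A *ᵥ (eigProjLin A θ x) = θ • (eigProjLin A θ x) := by
  rw [eigProjLin_apply]
  have h := ((eigSpace A θ).orthogonalProjectionOnto ((WithLp.equiv 2 (Fin n → ℝ)).symm x)).2
  rw [mem_eigSpace] at h
  simpa using h

lemma eigProjLin_fix (A : Matrix (Fin n) (Fin n) ℝ) (θ : ℝ) (x : Fin n → ℝ)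
    (hx : A *ᵥ x = θ • x) : eigProjLin A θ x = x := by
  have hm : ((WithLp.equiv 2 (Fin n → ℝ)).symm x) ∈ eigSpace A θ := by
    rw [mem_eigSpace]; simpa using hx
  rw [eigProjLin_apply]
  have := Submodule.starProjection_eq_self_iff.2 hm
  rw [← Submodule.starProjection_apply, this]
  rfl

noncomputable def eigProj (A : Matrix (Fin n) (Fin n) ℝ) (θ : ℝ) : Matrix (Fin n) (Fin n) ℝ :=
  LinearMap.toMatrix' (eigProjLin A θ)

lemma eigProj_mulVec (A : Matrix (Fin n) (Fin n) ℝ) (θ : ℝ) (x : Fin n → ℝ) :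
    eigProj A θ *ᵥ x = eigProjLin A θ x := by
  rw [eigProj, ← Matrix.toLin'_apply, Matrix.toLin'_toMatrix']

lemma eigProj_isEigenprojection (A : Matrix (Fin n) (Fin n) ℝ) (θ : ℝ) :
    IsEigenprojection A θ (eigProj A θ) := by
  refine ⟨?_, ?_, ?_, ?_⟩
  · -- symmetry
    refine Matrix.IsSymm.ext fun i j => ?_
    rw [eigProj, LinearMap.toMatrix'_apply, LinearMap.toMatrix'_apply]
    have hsingle : ∀ a : Fin n, (fun j' => if j' = a then (1:ℝ) else 0) = Pi.single a (1:ℝ) := by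
      intro a; ext j'; simp [Pi.single_apply]
    have happly : ∀ (z : EuclideanSpace ℝ (Fin n)) (b : Fin n),
        WithLp.equiv 2 (Fin n → ℝ) z b = (inner ℝ z (EuclideanSpace.single b (1:ℝ)) : ℝ) := by
      intro z b
      rw [EuclideanSpace.inner_single_right]
      simp
    have key : ∀ a b : Fin n, eigProjLin A θ (Pi.single a (1:ℝ)) b =
        (inner ℝ (EuclideanSpace.single a (1:ℝ))
          (((eigSpace A θ).orthogonalProjectionOnto (EuclideanSpace.single b (1:ℝ)) :
            eigSpace A θ) : EuclideanSpace ℝ (Fin n)) : ℝ) := by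
      intro a b
      rw [eigProjLin_apply, happly]
      exact Submodule.inner_starProjection_left_eq_right _ _ _
    rw [key, key, real_inner_comm]
    exact Submodule.inner_starProjection_left_eq_right _ _ _
  · rw [eigProj, ← LinearMap.toMatrix'_comp]
    congr 1
    exact LinearMap.ext fun x => eigProjLin_fix A θ _ (eigProjLin_mem A θ x)
  · intro v
    rw [eigProj_mulVec]
    exact eigProjLin_mem A θ v
  · intro v hv
    rw [eigProj_mulVec]
    exact eigProjLin_fix A θ v hv


noncomputable def uVec (N M : ℕ) (w c c' : ℝ) : ℕ → ℝ := fun k =>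
  if k = 0 then (-1)^(M/2) * c / w
  else if k = N+1 then (-1)^(M/2) * c' / w
  else if k ≤ M - 1 ∧ k % 2 = 1 then (-1)^((k-1)/2) * c
  else if N+2-M ≤ k ∧ k ≤ N ∧ k % 2 = N % 2 then (-1)^((N-k)/2) * c'
  else 0

lemma sum_ite_and {n b₀ : ℕ} (P : Prop) [Decidable P] (g : ℕ → ℝ) (h : P → b₀ < n) :
    ∑ b ∈ Finset.range n, (if P ∧ b = b₀ then g b else 0) = if P then g b₀ else 0 := by
  split_ifs with hP
  · have e : ∀ b ∈ Finset.range n, (if P ∧ b = b₀ then g b else 0) = (if b = b₀ then g b else 0) :=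
      fun b _ => by simp only [hP, true_and]
    rw [Finset.sum_congr rfl e, Finset.sum_ite_eq' (Finset.range n) b₀ g,
      if_pos (Finset.mem_range.2 (h hP))]
  · exact Finset.sum_eq_zero fun b _ => by simp [hP]

lemma modPath_entry (N M : ℕ) (w : ℝ) (hN : 2 ≤ N) (hM : 2 ≤ M) (hMN : 2*M ≤ N)
    (u : ℕ → ℝ) (a b : ℕ) (ha : a < N+2) (hb : b < N+2) :
    (if (1 ≤ a ∧ a ≤ N - 1 ∧ b = a + 1) ∨ (1 ≤ b ∧ b ≤ N - 1 ∧ a = b + 1) then (1:ℝ)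
      else if (a = 0 ∧ b = M) ∨ (b = 0 ∧ a = M) then w
      else if (a = N + 1 - M ∧ b = N + 1) ∨ (b = N + 1 - M ∧ a = N + 1) then w
      else 0) * u b =
      (if (2 ≤ a ∧ a ≤ N) ∧ b = a-1 then u b else 0)
    + (if (1 ≤ a ∧ a ≤ N-1) ∧ b = a+1 then u b else 0)
    + (if a = 0 ∧ b = M then w * u b else 0)
    + (if a = M ∧ b = 0 then w * u b else 0)
    + (if a = N+1-M ∧ b = N+1 then w * u b else 0)
    + (if a = N+1 ∧ b = N+1-M then w * u b else 0) := by
  by_cases h1 : (1 ≤ a ∧ a ≤ N - 1 ∧ b = a + 1) ∨ (1 ≤ b ∧ b ≤ N - 1 ∧ a = b + 1)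
  · rw [if_pos h1]
    rcases h1 with h | h
    · rw [if_neg (by omega), if_pos (show (1 ≤ a ∧ a ≤ N-1) ∧ b = a+1 by omega),
        if_neg (by omega), if_neg (by omega), if_neg (by omega), if_neg (by omega)]
      ring
    · rw [if_pos (show (2 ≤ a ∧ a ≤ N) ∧ b = a-1 by omega), if_neg (by omega),
        if_neg (by omega), if_neg (by omega), if_neg (by omega), if_neg (by omega)]
      ring
  · rw [if_neg h1]
    by_cases h2 : (a = 0 ∧ b = M) ∨ (b = 0 ∧ a = M)
    · rw [if_pos h2]
      rcases h2 with h | h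
      · rw [if_neg (by omega), if_neg (by omega), if_pos (show a = 0 ∧ b = M by omega),
          if_neg (by omega), if_neg (by omega), if_neg (by omega)]
        ring
      · rw [if_neg (by omega), if_neg (by omega), if_neg (by omega),
          if_pos (show a = M ∧ b = 0 by omega), if_neg (by omega), if_neg (by omega)]
        ring
    · rw [if_neg h2]
      by_cases h3 : (a = N + 1 - M ∧ b = N + 1) ∨ (b = N + 1 - M ∧ a = N + 1)
      · rw [if_pos h3]
        rcases h3 with h | h
        · rw [if_neg (by omega), if_neg (by omega), if_neg (by omega), if_neg (by omega),
            if_pos (show a = N+1-M ∧ b = N+1 by omega), if_neg (by omega)]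
          ring
        · rw [if_neg (by omega), if_neg (by omega), if_neg (by omega), if_neg (by omega),
            if_neg (by omega), if_pos (show a = N+1 ∧ b = N+1-M by omega)]
          ring
      · rw [if_neg h3, if_neg (by omega), if_neg (by omega), if_neg (by omega),
          if_neg (by omega), if_neg (by omega), if_neg (by omega)]
        ring

set_option maxHeartbeats 1000000 in
lemma mulVec_modPath (N M : ℕ) (w : ℝ) (hN : 2 ≤ N) (hM : 2 ≤ M) (hMN : 2*M ≤ N)
    (u : ℕ → ℝ) (i : Fin (N+2)) :
    (modPathAdj N M w *ᵥ (fun j : Fin (N+2) => u j)) i =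
      (if 2 ≤ (i:ℕ) ∧ (i:ℕ) ≤ N then u ((i:ℕ)-1) else 0)
    + (if 1 ≤ (i:ℕ) ∧ (i:ℕ) ≤ N-1 then u ((i:ℕ)+1) else 0)
    + (if (i:ℕ) = 0 then w * u M else 0)
    + (if (i:ℕ) = M then w * u 0 else 0)
    + (if (i:ℕ) = N+1-M then w * u (N+1) else 0)
    + (if (i:ℕ) = N+1 then w * u (N+1-M) else 0) := by
  have hrow : ∀ j : Fin (N+2), modPathAdj N M w i j * u j =
      (if (2 ≤ (i:ℕ) ∧ (i:ℕ) ≤ N) ∧ (j:ℕ) = (i:ℕ)-1 then u j else 0)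
    + (if (1 ≤ (i:ℕ) ∧ (i:ℕ) ≤ N-1) ∧ (j:ℕ) = (i:ℕ)+1 then u j else 0)
    + (if (i:ℕ) = 0 ∧ (j:ℕ) = M then w * u j else 0)
    + (if (i:ℕ) = M ∧ (j:ℕ) = 0 then w * u j else 0)
    + (if (i:ℕ) = N+1-M ∧ (j:ℕ) = N+1 then w * u j else 0)
    + (if (i:ℕ) = N+1 ∧ (j:ℕ) = N+1-M then w * u j else 0) :=
    fun j => modPath_entry N M w hN hM hMN u (i:ℕ) (j:ℕ) i.isLt j.isLt
  have hsum : (modPathAdj N M w *ᵥ (fun j : Fin (N+2) => u j)) i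
      = ∑ j : Fin (N+2), modPathAdj N M w i j * u j := rfl
  have conv1 : ∀ (P : Prop) [Decidable P] (b₀ : ℕ), (P → b₀ < N+2) →
      ∑ j : Fin (N+2), (if P ∧ (j:ℕ) = b₀ then u j else 0) = if P then u b₀ else 0 := by
    intro P _ b₀ h
    rw [Fin.sum_univ_eq_sum_range (fun b => if P ∧ b = b₀ then u b else 0) (N+2)]
    exact sum_ite_and P u h
  have conv2 : ∀ (P : Prop) [Decidable P] (b₀ : ℕ), (P → b₀ < N+2) →
      ∑ j : Fin (N+2), (if P ∧ (j:ℕ) = b₀ then w * u j else 0) = if P then w * u b₀ else 0 := by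
    intro P _ b₀ h
    rw [Fin.sum_univ_eq_sum_range (fun b => if P ∧ b = b₀ then w * u b else 0) (N+2)]
    exact sum_ite_and P (fun b => w * u b) h
  rw [hsum, Finset.sum_congr rfl (fun j _ => hrow j)]
  rw [Finset.sum_add_distrib, Finset.sum_add_distrib, Finset.sum_add_distrib,
    Finset.sum_add_distrib, Finset.sum_add_distrib]
  rw [conv1 _ _ (fun _ => by omega), conv1 _ _ (fun h => by omega),
    conv2 _ _ (fun _ => by omega), conv2 _ _ (fun _ => by omega),
    conv2 _ _ (fun _ => by omega), conv2 _ _ (fun _ => by omega)]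

section Kernel

variable (N M : ℕ) (w c c' : ℝ)

lemma uVec_zero : uVec N M w c c' 0 = (-1)^(M/2) * c / w := by
  unfold uVec
  rw [if_pos rfl]

lemma uVec_last : uVec N M w c c' (N+1) = (-1)^(M/2) * c' / w := by
  unfold uVec
  rw [if_neg (by omega : ¬(N+1 = 0)), if_pos rfl]

lemma uVec_left (k : ℕ) (hk0 : k ≠ 0) (hkN : k ≠ N+1) (h1 : k ≤ M-1) (h2 : k % 2 = 1) :
    uVec N M w c c' k = (-1)^((k-1)/2) * c := by
  simp only [uVec]
  rw [if_neg hk0, if_neg hkN, if_pos ⟨h1, h2⟩]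

lemma uVec_right (k : ℕ) (hk0 : k ≠ 0) (hkN : k ≠ N+1) (h0 : ¬(k ≤ M-1 ∧ k % 2 = 1))
    (h1 : N+2-M ≤ k) (h2 : k ≤ N) (h3 : k % 2 = N % 2) :
    uVec N M w c c' k = (-1)^((N-k)/2) * c' := by
  simp only [uVec]
  rw [if_neg hk0, if_neg hkN, if_neg h0, if_pos ⟨h1, h2, h3⟩]

lemma uVec_zero_of (k : ℕ) (hk0 : k ≠ 0) (hkN : k ≠ N+1) (h2 : ¬(k ≤ M-1 ∧ k % 2 = 1))
    (h3 : ¬(N+2-M ≤ k ∧ k ≤ N ∧ k % 2 = N % 2)) :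
    uVec N M w c c' k = 0 := by
  simp only [uVec]
  rw [if_neg hk0, if_neg hkN, if_neg h2, if_neg h3]

end Kernel

lemma modPath_kernel (N M : ℕ) (hN : 2 ≤ N) (hM2 : 2*M ≤ N) (hMm : M % 2 = 0) (hM : 2 ≤ M)
    (w : ℝ) (hw : w ≠ 0) (c c' : ℝ) (i : Fin (N+2)) :
    (modPathAdj N M w *ᵥ (fun j : Fin (N+2) => uVec N M w c c' j)) i = 0 := by
  have ha : (i:ℕ) < N+2 := i.isLt
  rw [mulVec_modPath N M w hN hM hM2 (uVec N M w c c') i]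
  by_cases h0 : (i:ℕ) = 0
  · rw [if_neg (by omega), if_neg (by omega), if_pos h0, if_neg (by omega), if_neg (by omega),
      if_neg (by omega), uVec_zero_of N M w c c' M (by omega) (by omega) (by omega) (by omega)]
    ring
  by_cases hN1 : (i:ℕ) = N+1
  · rw [if_neg (by omega), if_neg (by omega), if_neg (by omega), if_neg (by omega),
      if_neg (by omega), if_pos hN1,
      uVec_zero_of N M w c c' (N+1-M) (by omega) (by omega) (by omega) (by omega)]
    ring
  by_cases hMM : (i:ℕ) = M
  · rw [if_pos (by omega), if_pos (by omega), if_neg (by omega), if_pos hMM, if_neg (by omega),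
      if_neg (by omega), hMM,
      uVec_left N M w c c' (M-1) (by omega) (by omega) (by omega) (by omega),
      uVec_zero_of N M w c c' (M+1) (by omega) (by omega) (by omega) (by omega),
      uVec_zero N M w c c']
    have e : M/2 = (M-1-1)/2 + 1 := by omega
    rw [e, pow_succ]
    field_simp
    ring
  by_cases hNM : (i:ℕ) = N+1-M
  · rw [if_pos (by omega), if_pos (by omega), if_neg (by omega), if_neg (by omega), if_pos hNM,
      if_neg (by omega), hNM,
      uVec_zero_of N M w c c' (N+1-M-1) (by omega) (by omega) (by omega) (by omega),
      uVec_right N M w c c' (N+1-M+1) (by omega) (by omega) (by omega) (by omega) (by omega)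
        (by omega),
      uVec_last N M w c c']
    have e1 : N-(N+1-M+1) = M-2 := by omega
    have e2 : M/2 = (M-2)/2 + 1 := by omega
    rw [e1, e2, pow_succ]
    field_simp
    ring
  by_cases h1' : (i:ℕ) = 1
  · rw [if_neg (by omega), if_pos (by omega), if_neg (by omega), if_neg (by omega),
      if_neg (by omega), if_neg (by omega), h1',
      uVec_zero_of N M w c c' (1+1) (by omega) (by omega) (by omega) (by omega)]
    ring
  by_cases hNN : (i:ℕ) = N
  · rw [if_pos (by omega), if_neg (by omega), if_neg (by omega), if_neg (by omega),
      if_neg (by omega), if_neg (by omega), hNN,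
      uVec_zero_of N M w c c' (N-1) (by omega) (by omega) (by omega) (by omega)]
    ring
  have hgen : 2 ≤ (i:ℕ) ∧ (i:ℕ) ≤ N-1 := by omega
  rw [if_pos (by omega), if_pos (by omega), if_neg h0, if_neg hMM, if_neg hNM, if_neg hN1]
  by_cases hreg1 : (i:ℕ) ≤ M-1
  · by_cases hpar : (i:ℕ) % 2 = 0
    · rw [uVec_left N M w c c' ((i:ℕ)-1) (by omega) (by omega) (by omega) (by omega),
        uVec_left N M w c c' ((i:ℕ)+1) (by omega) (by omega) (by omega) (by omega)]
      have e : ((i:ℕ)+1-1)/2 = ((i:ℕ)-1-1)/2 + 1 := by omega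
      rw [e, pow_succ]
      ring
    · rw [uVec_zero_of N M w c c' ((i:ℕ)-1) (by omega) (by omega) (by omega) (by omega),
        uVec_zero_of N M w c c' ((i:ℕ)+1) (by omega) (by omega) (by omega) (by omega)]
      ring
  by_cases hreg2 : (i:ℕ) < N+1-M
  · rw [uVec_zero_of N M w c c' ((i:ℕ)-1) (by omega) (by omega) (by omega) (by omega),
      uVec_zero_of N M w c c' ((i:ℕ)+1) (by omega) (by omega) (by omega) (by omega)]
    ring
  by_cases hpar : (i:ℕ) % 2 = N % 2
  · rw [uVec_zero_of N M w c c' ((i:ℕ)-1) (by omega) (by omega) (by omega) (by omega),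
      uVec_zero_of N M w c c' ((i:ℕ)+1) (by omega) (by omega) (by omega) (by omega)]
    ring
  · rw [uVec_right N M w c c' ((i:ℕ)-1) (by omega) (by omega) (by omega) (by omega) (by omega)
        (by omega),
      uVec_right N M w c c' ((i:ℕ)+1) (by omega) (by omega) (by omega) (by omega) (by omega)
        (by omega)]
    have e : (N-((i:ℕ)-1))/2 = (N-((i:ℕ)+1))/2 + 1 := by omega
    rw [e, pow_succ]
    ring


theorem stmt_9 (N M : ℕ) (hN : 2 ≤ N) (hM1 : 1 ≤ M) (hM2 : 2 * M ≤ N)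
    (hMe : Even M) (w : ℝ) (hw : w ≠ 0) :
    ¬ StronglyCospectral (modPathAdj N M w) ⟨1, by omega⟩ ⟨N, by omega⟩ ∧
    (∃ vp : Fin (N + 2) → ℝ, vp ≠ 0 ∧ modPathAdj N M w *ᵥ vp = (0 : ℝ) • vp ∧
      vp ⟨1, by omega⟩ = vp ⟨N, by omega⟩ ∧ vp ⟨1, by omega⟩ ≠ 0) ∧
    (∃ vm : Fin (N + 2) → ℝ, vm ≠ 0 ∧ modPathAdj N M w *ᵥ vm = (0 : ℝ) • vm ∧
      vm ⟨1, by omega⟩ = - vm ⟨N, by omega⟩ ∧ vm ⟨1, by omega⟩ ≠ 0) := by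
  have hM : 2 ≤ M := by
    rcases hMe with ⟨t, rfl⟩; omega
  have hMm : M % 2 = 0 := Nat.even_iff.1 hMe
  have hker : ∀ (c c' : ℝ), modPathAdj N M w *ᵥ (fun j : Fin (N+2) => uVec N M w c c' j)
      = (0:ℝ) • (fun j : Fin (N+2) => uVec N M w c c' j) := by
    intro c c'
    funext i
    rw [modPath_kernel N M hN hM2 hMm hM w hw c c' i]
    simp
  have hval1 : ∀ c c' : ℝ, uVec N M w c c' 1 = c := by
    intro c c'
    rw [uVec_left N M w c c' 1 (by omega) (by omega) (by omega) (by omega)]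
    norm_num
  have hvalN : ∀ c c' : ℝ, uVec N M w c c' N = c' := by
    intro c c'
    rw [uVec_right N M w c c' N (by omega) (by omega) (by omega) (by omega) (by omega) rfl]
    rw [Nat.sub_self]
    norm_num
  refine ⟨?_, ⟨fun j => uVec N M w 1 1 j, ?_, hker 1 1, ?_, ?_⟩,
    ⟨fun j => uVec N M w 1 (-1) j, ?_, hker 1 (-1), ?_, ?_⟩⟩
  · -- not strongly cospectral
    intro hSC
    obtain ⟨hsymm, hidem, hrange, hfix⟩ := eigProj_isEigenprojection (modPathAdj N M w) 0
    have key : ∀ (z : Fin (N+2) → ℝ), modPathAdj N M w *ᵥ z = (0:ℝ) • z →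
        ∀ x : Fin (N+2), z ⬝ᵥ (eigProj (modPathAdj N M w) 0 *ᵥ Pi.single x 1) = z x := by
      intro z hz x
      rw [Matrix.dotProduct_mulVec, ← Matrix.mulVec_transpose, hsymm, hfix z hz,
        dotProduct_single, mul_one]
    rcases hSC 0 (eigProj (modPathAdj N M w) 0) ⟨hsymm, hidem, hrange, hfix⟩ with h | h
    · have e1 := key (fun j => uVec N M w 1 (-1) j) (hker 1 (-1)) ⟨1, by omega⟩
      have e2 := key (fun j => uVec N M w 1 (-1) j) (hker 1 (-1)) ⟨N, by omega⟩
      rw [h, e2] at e1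
      have e1' : uVec N M w 1 (-1) N = uVec N M w 1 (-1) 1 := e1
      rw [hval1 1 (-1), hvalN 1 (-1)] at e1'
      norm_num at e1'
    · have e1 := key (fun j => uVec N M w 1 1 j) (hker 1 1) ⟨1, by omega⟩
      have e2 := key (fun j => uVec N M w 1 1 j) (hker 1 1) ⟨N, by omega⟩
      rw [h, dotProduct_neg, e2] at e1
      have e1' : -uVec N M w 1 1 N = uVec N M w 1 1 1 := e1
      rw [hval1 1 1, hvalN 1 1] at e1'
      norm_num at e1'
  · -- vp ≠ 0
    intro h
    have h1 : uVec N M w 1 1 1 = 0 := congrFun h ⟨1, by omega⟩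
    rw [hval1 1 1] at h1
    exact one_ne_zero h1
  · show uVec N M w 1 1 1 = uVec N M w 1 1 N
    rw [hval1 1 1, hvalN 1 1]
  · show uVec N M w 1 1 1 ≠ 0
    rw [hval1 1 1]
    exact one_ne_zero
  · -- vm ≠ 0
    intro h
    have h1 : uVec N M w 1 (-1) 1 = 0 := congrFun h ⟨1, by omega⟩
    rw [hval1 1 (-1)] at h1
    exact one_ne_zero h1
  · show uVec N M w 1 (-1) 1 = -uVec N M w 1 (-1) N
    rw [hval1 1 (-1), hvalN 1 (-1)]
    norm_num
  · show uVec N M w 1 (-1) 1 ≠ 0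
    rw [hval1 1 (-1)]
    exact one_ne_zero
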